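/- Backward gradient vector norm bound. Consider the ResNet with differentiable activation satisfying |φ'(z)| ≤ C_φ for all z, and parameters satisfying ‖w^{(L+1)}‖₂ ≤ 2√n and ‖W^{(ℓ)}‖ ≤ 3√n, ‖V^{(ℓ)}‖ ≤ 3√n for all ℓ = 1,…,L. Define δ^{(L)} = (σ_w/√n)·w^{(L+1)} and δ^{(ℓ)} = ( I_n + α·(σ_w/√n)·W^{(ℓ+1)ᵀ}·diag{φ'(g^{(ℓ+1)})}·(σ_v/√n)·V^{(ℓ+1)ᵀ} )·δ^{(ℓ+1)} for ℓ = L−1,…,0 (so δ^{(ℓ)} = ∇_{x^{(ℓ)}} f). Then for every ℓ ∈ {0,1,…,L}: ‖δ^{(ℓ)}‖₂ ≤ (1 + 9α·C_φ·σ_v·σ_w)^{L−ℓ} · 2σ_w. In particular ‖δ^{(ℓ)}‖₂ ≤ K₂ := (1 + 9α·C_φ·σ_v·σ_w)^L · 2σ_w for all ℓ. -/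

import Mathlib

open MeasureTheory ProbabilityTheory Filter

set_option maxRecDepth 8000

noncomputable section

/-- Index type for all ResNet parameters: w^{(L+1)}, {W^{(ℓ)}}, {V^{(ℓ)}}, U. -/
abbrev ParamIdx (n L d : ℕ) : Type :=
  (Fin n) ⊕ (Fin L × Fin n × Fin n) ⊕ (Fin L × Fin n × Fin n) ⊕ (Fin n × Fin d)

/-- The full (vectorized) parameter vector. -/
abbrev Params (n L d : ℕ) : Type := ParamIdx n L d → ℝ

/-- Last-layer weight vector w^{(L+1)}. -/
def wOut {n L d : ℕ} (θ : Params n L d) : Fin n → ℝ := fun i => θ (Sum.inl i)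

/-- W^{(ℓ)} for ℓ = 1,…,L (zero outside this range). -/
def Wmat {n L d : ℕ} (θ : Params n L d) (ℓ : ℕ) : Matrix (Fin n) (Fin n) ℝ :=
  if h : 1 ≤ ℓ ∧ ℓ ≤ L then
    Matrix.of fun i j => θ (Sum.inr (Sum.inl (⟨ℓ - 1, by omega⟩, i, j)))
  else 0

/-- V^{(ℓ)} for ℓ = 1,…,L (zero outside this range). -/
def Vmat {n L d : ℕ} (θ : Params n L d) (ℓ : ℕ) : Matrix (Fin n) (Fin n) ℝ :=
  if h : 1 ≤ ℓ ∧ ℓ ≤ L then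
    Matrix.of fun i j => θ (Sum.inr (Sum.inr (Sum.inl (⟨ℓ - 1, by omega⟩, i, j))))
  else 0

/-- Input lifting matrix U. -/
def Umat {n L d : ℕ} (θ : Params n L d) : Matrix (Fin n) (Fin d) ℝ :=
  Matrix.of fun i j => θ (Sum.inr (Sum.inr (Sum.inr (i, j))))

/-- Euclidean (ℓ²) norm of a finite vector. -/
def l2norm {k : ℕ} (v : Fin k → ℝ) : ℝ := Real.sqrt (∑ i, (v i) ^ 2)

/-- Euclidean norm of a full parameter vector. -/
def paramNorm {n L d : ℕ} (θ : Params n L d) : ℝ := Real.sqrt (∑ i, (θ i) ^ 2)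

/-- Spectral (operator) norm of a matrix. -/
def specNorm {m k : ℕ} (A : Matrix (Fin m) (Fin k) ℝ) : ℝ :=
  sSup ((fun v => l2norm (A.mulVec v)) '' {v | l2norm v ≤ 1})

/-- Smallest singular value of a matrix. -/
def singMin {m k : ℕ} (A : Matrix (Fin m) (Fin k) ℝ) : ℝ :=
  sInf ((fun v => l2norm (A.mulVec v)) '' {v | l2norm v = 1})

/-- Frobenius norm of a matrix. -/
def frobNorm {m k : ℕ} (A : Matrix (Fin m) (Fin k) ℝ) : ℝ :=
  Real.sqrt (∑ i, ∑ j, (A i j) ^ 2)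

/-- Layer activations x^{(ℓ)} of the ResNet. -/
def xvec {n L d : ℕ} (φ : ℝ → ℝ) (α σv σw : ℝ) (θ : Params n L d) (x : Fin d → ℝ) :
    ℕ → Fin n → ℝ
  | 0 => (Real.sqrt d)⁻¹ • (Umat θ).mulVec x
  | ℓ + 1 =>
      xvec φ α σv σw θ x ℓ +
        (α * σv / Real.sqrt n) • (Vmat θ (ℓ + 1)).mulVec
          (fun i => φ ((σw / Real.sqrt n) *
              (Wmat θ (ℓ + 1)).mulVec (xvec φ α σv σw θ x ℓ) i))

/-- Pre-activations g^{(ℓ)} of the ResNet (meaningful for ℓ = 1,…,L). -/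
def gvec {n L d : ℕ} (φ : ℝ → ℝ) (α σv σw : ℝ) (θ : Params n L d) (x : Fin d → ℝ)
    (ℓ : ℕ) : Fin n → ℝ :=
  (σw / Real.sqrt n) • (Wmat θ ℓ).mulVec (xvec φ α σv σw θ x (ℓ - 1))

/-- The ResNet output f(x;θ). -/
def fnet {n L d : ℕ} (φ : ℝ → ℝ) (α σv σw : ℝ) (θ : Params n L d) (x : Fin d → ℝ) : ℝ :=
  (σw / Real.sqrt n) * ∑ i, wOut θ i * xvec φ α σv σw θ x L i

/-- The i.i.d. standard Gaussian initialization measure on the parameters. -/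
def initMeasure (n L d : ℕ) : Measure (Params n L d) :=
  Measure.pi fun _ => gaussianReal 0 1

/-- Standard Gaussian on ℝ². -/
def stdGauss2 : Measure (ℝ × ℝ) := (gaussianReal 0 1).prod (gaussianReal 0 1)

/-- The centered bivariate Gaussian N(0,Σ) for Σ = [[K11,K12],[K12,K22]] positive
semidefinite, realized via the Cholesky factorization. -/
def biGauss (K11 K12 K22 : ℝ) : Measure (ℝ × ℝ) :=
  stdGauss2.map (fun z => (Real.sqrt K11 * z.1,
    (K12 / Real.sqrt K11) * z.1 + Real.sqrt (K22 - K12 ^ 2 / K11) * z.2))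

/-- T(Σ) = E_{(u,v)∼N(0,Σ)}[φ(u)φ(v)]. -/
def TT (φ : ℝ → ℝ) (K11 K12 K22 : ℝ) : ℝ :=
  ∫ uv, φ uv.1 * φ uv.2 ∂(biGauss K11 K12 K22)

/-- Ṫ(Σ) = E_{(u,v)∼N(0,Σ)}[φ'(u)φ'(v)]. -/
def TTdot (φ : ℝ → ℝ) (K11 K12 K22 : ℝ) : ℝ :=
  ∫ uv, deriv φ uv.1 * deriv φ uv.2 ∂(biGauss K11 K12 K22)

/-- The limiting GP kernels: `Kker … ℓ x y` is K^{(ℓ+1)}(x,y); in particular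
`Kker … 0 x y = K^{(1)}(x,y) = (σ_w²/d)·xᵀy` and `Kker … L x y = K^{(L+1)}(x,y)`. -/
def Kker (φ : ℝ → ℝ) (α σv σw : ℝ) {d : ℕ} : ℕ → (Fin d → ℝ) → (Fin d → ℝ) → ℝ
  | 0 => fun x y => σw ^ 2 / d * ∑ i, x i * y i
  | ℓ + 1 => fun x y =>
      Kker φ α σv σw ℓ x y + α ^ 2 * σv ^ 2 * σw ^ 2 *
        TT φ (Kker φ α σv σw ℓ x x) (Kker φ α σv σw ℓ x y) (Kker φ α σv σw ℓ y y)


/-- Auxiliary downward recursion: `deltaAux … k` is δ^{(L−k)}, with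
δ^{(L)} = (σ_w/√n)·w^{(L+1)} and
δ^{(ℓ)} = (I + α(σ_w/√n)W^{(ℓ+1)ᵀ}·diag{φ'(g^{(ℓ+1)})}·(σ_v/√n)V^{(ℓ+1)ᵀ})·δ^{(ℓ+1)}. -/
def deltaAux {n L d : ℕ} (φ : ℝ → ℝ) (α σv σw : ℝ) (θ : Params n L d) (x : Fin d → ℝ) :
    ℕ → Fin n → ℝ
  | 0 => (σw / Real.sqrt n) • wOut θ
  | k + 1 =>
      deltaAux φ α σv σw θ x k +
        (α * σw * σv / (n : ℝ)) •
          ((Wmat θ (L - k)).transpose *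
              Matrix.diagonal (fun i => deriv φ (gvec φ α σv σw θ x (L - k) i)) *
              (Vmat θ (L - k)).transpose).mulVec (deltaAux φ α σv σw θ x k)

/-- δ^{(ℓ)} = ∇_{x^{(ℓ)}} f, for ℓ = 0,…,L. -/
def deltaVec {n L d : ℕ} (φ : ℝ → ℝ) (α σv σw : ℝ) (θ : Params n L d) (x : Fin d → ℝ)
    (ℓ : ℕ) : Fin n → ℝ :=
  deltaAux φ α σv σw θ x (L - ℓ)


section AuxLemmas

open scoped Matrix.Norms.L2Operator

lemma l2norm_eq_norm {k : ℕ} (v : Fin k → ℝ) :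
    l2norm v = ‖(WithLp.equiv 2 (Fin k → ℝ)).symm v‖ := by
  rw [EuclideanSpace.norm_eq]
  simp [l2norm, sq_abs]

lemma l2norm_nonneg' {k : ℕ} (v : Fin k → ℝ) : 0 ≤ l2norm v := Real.sqrt_nonneg _

lemma l2norm_smul' {k : ℕ} (a : ℝ) (v : Fin k → ℝ) : l2norm (a • v) = |a| * l2norm v := by
  simp only [l2norm, Pi.smul_apply, smul_eq_mul, mul_pow, ← Finset.mul_sum]
  rw [Real.sqrt_mul (sq_nonneg a), Real.sqrt_sq_eq_abs]

lemma l2norm_add_le {k : ℕ} (u v : Fin k → ℝ) : l2norm (u + v) ≤ l2norm u + l2norm v := by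
  simp only [l2norm_eq_norm]
  exact norm_add_le ((WithLp.equiv 2 (Fin k → ℝ)).symm u) ((WithLp.equiv 2 (Fin k → ℝ)).symm v)

lemma specNorm_eq_opNorm {m k : ℕ} (A : Matrix (Fin m) (Fin k) ℝ) : specNorm A = ‖A‖ := by
  rw [Matrix.l2_opNorm_def, ← ContinuousLinearMap.sSup_unitClosedBall_eq_norm]
  have happ : ∀ w : EuclideanSpace ℝ (Fin k),
      ((Matrix.toEuclideanLin.trans LinearMap.toContinuousLinearMap) A) w
        = (WithLp.equiv 2 (Fin m → ℝ)).symm (A.mulVec ((WithLp.equiv 2 (Fin k → ℝ)) w)) :=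
    fun w => rfl
  unfold specNorm
  congr 1
  ext y
  constructor
  · rintro ⟨v, hv, rfl⟩
    refine ⟨(WithLp.equiv 2 (Fin k → ℝ)).symm v, ?_, ?_⟩
    · rw [Metric.mem_closedBall, dist_zero_right, ← l2norm_eq_norm]
      exact hv
    · simp only [happ, Equiv.apply_symm_apply]
      rw [← l2norm_eq_norm]
  · rintro ⟨w, hw, rfl⟩
    refine ⟨(WithLp.equiv 2 (Fin k → ℝ)) w, ?_, ?_⟩
    · rw [Set.mem_setOf_eq, l2norm_eq_norm, Equiv.symm_apply_apply]
      exact mem_closedBall_zero_iff.mp hw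
    · simp only [happ]
      rw [l2norm_eq_norm]

lemma l2norm_mulVec_le {m k : ℕ} (A : Matrix (Fin m) (Fin k) ℝ) (v : Fin k → ℝ) :
    l2norm (A.mulVec v) ≤ specNorm A * l2norm v := by
  rw [specNorm_eq_opNorm, l2norm_eq_norm, l2norm_eq_norm v]
  exact Matrix.l2_opNorm_mulVec A ((WithLp.equiv 2 (Fin k → ℝ)).symm v)

lemma specNorm_transpose {m k : ℕ} (A : Matrix (Fin m) (Fin k) ℝ) :
    specNorm A.transpose = specNorm A := by
  have hA : A.conjTranspose = A.transpose := by
    ext i j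
    simp [Matrix.conjTranspose_apply]
  rw [specNorm_eq_opNorm, specNorm_eq_opNorm, ← Matrix.l2_opNorm_conjTranspose A, hA]

lemma l2norm_diag_mulVec {k : ℕ} (dg : Fin k → ℝ) (v : Fin k → ℝ) (C : ℝ) (hC : 0 ≤ C)
    (h : ∀ i, |dg i| ≤ C) :
    l2norm ((Matrix.diagonal dg).mulVec v) ≤ C * l2norm v := by
  have h1 : ∀ i, ((Matrix.diagonal dg).mulVec v i) ^ 2 ≤ C ^ 2 * (v i) ^ 2 := by
    intro i
    rw [Matrix.mulVec_diagonal]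
    have h2 : (dg i) ^ 2 ≤ C ^ 2 := by
      have := h i
      nlinarith [abs_nonneg (dg i), sq_abs (dg i)]
    nlinarith [sq_nonneg (v i)]
  calc l2norm ((Matrix.diagonal dg).mulVec v)
      = Real.sqrt (∑ i, ((Matrix.diagonal dg).mulVec v i) ^ 2) := rfl
    _ ≤ Real.sqrt (∑ i, C ^ 2 * (v i) ^ 2) :=
        Real.sqrt_le_sqrt (Finset.sum_le_sum fun i _ => h1 i)
    _ = C * l2norm v := by
        rw [← Finset.mul_sum, Real.sqrt_mul (sq_nonneg C), Real.sqrt_sq hC]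
        rfl

end AuxLemmas

/-- **Backward gradient vector norm bound.** If ‖w^{(L+1)}‖₂ ≤ 2√n,
‖W^{(ℓ)}‖, ‖V^{(ℓ)}‖ ≤ 3√n for all ℓ, and |φ'| ≤ C_φ, then for every ℓ ∈ {0,…,L}:
‖δ^{(ℓ)}‖₂ ≤ (1 + 9αC_φσ_vσ_w)^{L−ℓ}·2σ_w; in particular it is ≤ K₂ for all ℓ. -/
theorem backward_gradient_norm_bound
    (n L d : ℕ) (hn : 1 ≤ n) (hL : 1 ≤ L) (hd : 1 ≤ d)
    (α σv σw Cφ : ℝ) (hα : 0 < α) (hσv : 0 < σv) (hσw : 0 < σw) (hCφ : 0 < Cφ)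
    (φ : ℝ → ℝ) (hφd : Differentiable ℝ φ) (hφ' : ∀ z : ℝ, |deriv φ z| ≤ Cφ)
    (B : ℝ) (x : Fin d → ℝ) (hx : l2norm x ≤ B)
    (θ : Params n L d)
    (hw : l2norm (wOut θ) ≤ 2 * Real.sqrt n)
    (hWV : ∀ ℓ : ℕ, 1 ≤ ℓ → ℓ ≤ L →
      specNorm (Wmat θ ℓ) ≤ 3 * Real.sqrt n ∧ specNorm (Vmat θ ℓ) ≤ 3 * Real.sqrt n) :
    (∀ ℓ : ℕ, ℓ ≤ L →
      l2norm (deltaVec φ α σv σw θ x ℓ) ≤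
        (1 + 9 * α * Cφ * σv * σw) ^ (L - ℓ) * (2 * σw)) ∧
    (∀ ℓ : ℕ, ℓ ≤ L →
      l2norm (deltaVec φ α σv σw θ x ℓ) ≤
        (1 + 9 * α * Cφ * σv * σw) ^ L * (2 * σw)) := by
  have hn0 : (0:ℝ) < n := by exact_mod_cast hn
  have hsn : (0:ℝ) < Real.sqrt n := Real.sqrt_pos.2 hn0
  have hβ : (0:ℝ) ≤ 9 * α * Cφ * σv * σw := by positivity
  have key : ∀ k : ℕ, k ≤ L →
      l2norm (deltaAux φ α σv σw θ x k) ≤ (1 + 9 * α * Cφ * σv * σw) ^ k * (2 * σw) := by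
    intro k
    induction k with
    | zero =>
      intro _
      show l2norm ((σw / Real.sqrt n) • wOut θ) ≤ _
      rw [l2norm_smul', abs_of_pos (by positivity), pow_zero, one_mul]
      calc σw / Real.sqrt n * l2norm (wOut θ)
          ≤ σw / Real.sqrt n * (2 * Real.sqrt n) := by
            exact mul_le_mul_of_nonneg_left hw (by positivity)
        _ = 2 * σw := by field_simp
    | succ k ih =>
      intro hk1
      have ihk := ih (by omega)
      obtain ⟨hWb, hVb⟩ := hWV (L - k) (by omega) (by omega)
      set δ := deltaAux φ α σv σw θ x k with hδ
      set t := l2norm δ with htdef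
      have ht : 0 ≤ t := l2norm_nonneg' _
      set D := Matrix.diagonal (fun i => deriv φ (gvec φ α σv σw θ x (L - k) i)) with hD
      have h1 : l2norm ((Vmat θ (L - k)).transpose.mulVec δ) ≤ 3 * Real.sqrt n * t :=
        le_trans (l2norm_mulVec_le _ _)
          (mul_le_mul_of_nonneg_right (by rw [specNorm_transpose]; exact hVb) ht)
      have h2 : l2norm (D.mulVec ((Vmat θ (L - k)).transpose.mulVec δ)) ≤ Cφ * (3 * Real.sqrt n * t) :=
        le_trans (l2norm_diag_mulVec _ _ Cφ hCφ.le (fun i => hφ' _))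
          (mul_le_mul_of_nonneg_left h1 hCφ.le)
      have h3 : l2norm ((Wmat θ (L - k)).transpose.mulVec (D.mulVec ((Vmat θ (L - k)).transpose.mulVec δ)))
          ≤ 3 * Real.sqrt n * (Cφ * (3 * Real.sqrt n * t)) :=
        le_trans (l2norm_mulVec_le _ _)
          (mul_le_mul (by rw [specNorm_transpose]; exact hWb) h2 (l2norm_nonneg' _)
            (by positivity))
      have hexp : deltaAux φ α σv σw θ x (k + 1) =
          δ + (α * σw * σv / (n : ℝ)) •
            ((Wmat θ (L - k)).transpose * D * (Vmat θ (L - k)).transpose).mulVec δ := rfl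
      have hm : ((Wmat θ (L - k)).transpose * D * (Vmat θ (L - k)).transpose).mulVec δ =
          (Wmat θ (L - k)).transpose.mulVec (D.mulVec ((Vmat θ (L - k)).transpose.mulVec δ)) := by
        rw [← Matrix.mulVec_mulVec, ← Matrix.mulVec_mulVec]
      have heq : (α * σw * σv / (n : ℝ)) * (3 * Real.sqrt n * (Cφ * (3 * Real.sqrt n * t)))
          = (9 * α * Cφ * σv * σw) * t := by
        have : (α * σw * σv / (n : ℝ)) * (3 * Real.sqrt n * (Cφ * (3 * Real.sqrt n * t)))
            = (α * σw * σv * Cφ * 9 * t) * ((Real.sqrt n * Real.sqrt n) / (n : ℝ)) := by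
          ring
        rw [this, Real.mul_self_sqrt hn0.le, div_self hn0.ne', mul_one]
        ring
      have hstep : l2norm (deltaAux φ α σv σw θ x (k + 1)) ≤
          (1 + 9 * α * Cφ * σv * σw) * t := by
        rw [hexp, hm]
        refine le_trans (l2norm_add_le _ _) ?_
        rw [l2norm_smul', abs_of_pos (by positivity)]
        have := mul_le_mul_of_nonneg_left h3 (le_of_lt (by positivity :
          (0:ℝ) < α * σw * σv / (n : ℝ)))
        nlinarith [this, heq]
      calc l2norm (deltaAux φ α σv σw θ x (k + 1))
          ≤ (1 + 9 * α * Cφ * σv * σw) * t := hstep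
        _ ≤ (1 + 9 * α * Cφ * σv * σw) * ((1 + 9 * α * Cφ * σv * σw) ^ k * (2 * σw)) :=
            mul_le_mul_of_nonneg_left ihk (by linarith)
        _ = (1 + 9 * α * Cφ * σv * σw) ^ (k + 1) * (2 * σw) := by ring
  constructor
  · intro ℓ hℓ
    exact key (L - ℓ) (by omega)
  · intro ℓ hℓ
    calc l2norm (deltaVec φ α σv σw θ x ℓ)
        ≤ (1 + 9 * α * Cφ * σv * σw) ^ (L - ℓ) * (2 * σw) := key (L - ℓ) (by omega)
      _ ≤ (1 + 9 * α * Cφ * σv * σw) ^ L * (2 * σw) := by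
          have h1 : (1:ℝ) ≤ 1 + 9 * α * Cφ * σv * σw := by linarith
          exact mul_le_mul_of_nonneg_right (pow_le_pow_right₀ h1 (by omega)) (by positivity)


end
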